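/- For every λ ∈ ℚ with λ ≠ 0 and every word w ∈ L*: m_λ(Δ̄_λ(w)) − 2^{dpt(w)}·w ∈ T_-, where m_λ : ℚ⟨L⟩ ⊗ ℚ⟨L⟩ → ℚ⟨L⟩ is the linear map induced by the product ⧢_λ and dpt(w) is the number of occurrences of the letter y in w. -/

import Mathlib

open scoped TensorProduct

/-- The two-letter alphabet `L = {d, y}`. -/
inductive Letter : Type
  | d : Letter
  | y : Letter
deriving DecidableEq

/-- `ℚ⟨L⟩`, the ℚ-vector space with basis the words on `L` (with the concatenation
product, it is the free noncommutative ℚ-algebra on `L`). -/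
abbrev V : Type := MonoidAlgebra ℚ (FreeMonoid Letter)

/-- The basis vector corresponding to a word. -/
noncomputable def wrd (w : List Letter) : V :=
  MonoidAlgebra.single (FreeMonoid.ofList w) (1 : ℚ)

/-- The shuffle-type product `⧢_λ` on basis words, defined recursively by
(P1) `e ⧢ w = w ⧢ e = w`; (P2) `(yu) ⧢ v = u ⧢ (yv) = y(u ⧢ v)`;
(P3) `(du) ⧢ (dv) = (1/λ)(d(u ⧢ v) − (du) ⧢ v − u ⧢ (dv))`. -/
noncomputable def shW (lam : ℚ) : List Letter → List Letter → V
  | [], v => wrd v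
  | u@(_ :: _), [] => wrd u
  | (Letter.y :: u), v => wrd [Letter.y] * shW lam u v
  | (Letter.d :: u), (Letter.y :: v) => wrd [Letter.y] * shW lam (Letter.d :: u) v
  | (Letter.d :: u), (Letter.d :: v) =>
      lam⁻¹ • (wrd [Letter.d] * shW lam u v
        - shW lam (Letter.d :: u) v - shW lam u (Letter.d :: v))
termination_by u v => u.length + v.length

/-- The ℚ-bilinear extension of `⧢_λ` to `ℚ⟨L⟩`. -/
noncomputable def shL (lam : ℚ) : V →ₗ[ℚ] V →ₗ[ℚ] V :=
  (Finsupp.lsum ℚ fun u => LinearMap.toSpanSingleton ℚ (V →ₗ[ℚ] V)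
    ((Finsupp.lsum ℚ fun v =>
      LinearMap.toSpanSingleton ℚ V (shW lam (FreeMonoid.toList u) (FreeMonoid.toList v)))
        ∘ₗ (MonoidAlgebra.coeffLinearEquiv ℚ : V ≃ₗ[ℚ] (FreeMonoid Letter →₀ ℚ)).toLinearMap))
    ∘ₗ (MonoidAlgebra.coeffLinearEquiv ℚ : V ≃ₗ[ℚ] (FreeMonoid Letter →₀ ℚ)).toLinearMap

/-- The values of `Δ̄_λ` on letters: `Δ̄_λ(y) = e⊗y + y⊗e`,
`Δ̄_λ(d) = e⊗d + d⊗e + λ·(d⊗d)`. -/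
noncomputable def dval (lam : ℚ) : Letter → (V ⊗[ℚ] V)
  | Letter.y => 1 ⊗ₜ wrd [Letter.y] + wrd [Letter.y] ⊗ₜ 1
  | Letter.d => 1 ⊗ₜ wrd [Letter.d] + wrd [Letter.d] ⊗ₜ 1
      + lam • (wrd [Letter.d] ⊗ₜ wrd [Letter.d])

/-- `Δ̄_λ : ℚ⟨L⟩ → ℚ⟨L⟩ ⊗ ℚ⟨L⟩`, the unique morphism of unital ℚ-algebras
(concatenation product on the source, componentwise concatenation on the tensor square)
with the prescribed values on the letters. -/
noncomputable def Delta (lam : ℚ) : V →ₐ[ℚ] (V ⊗[ℚ] V) :=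
  MonoidAlgebra.lift ℚ (V ⊗[ℚ] V) (FreeMonoid Letter) (FreeMonoid.lift (dval lam))

/-- The componentwise extension of `⧢_λ` to `ℚ⟨L⟩ ⊗ ℚ⟨L⟩`:
`(a⊗b) ⧢ (c⊗d) = (a ⧢ c) ⊗ (b ⧢ d)`. -/
noncomputable def shT (lam : ℚ) (x z : V ⊗[ℚ] V) : V ⊗[ℚ] V :=
  (TensorProduct.map (TensorProduct.lift (shL lam)) (TensorProduct.lift (shL lam)))
    ((TensorProduct.tensorTensorTensorComm ℚ V V V V) (x ⊗ₜ z))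

/-- `T₋ ⊆ ℚ⟨L⟩`: the span of the words ending in the letter `d`. -/
noncomputable def Tneg : Submodule ℚ V :=
  Submodule.span ℚ {x : V | ∃ w : List Letter, x = wrd (w ++ [Letter.d])}

/-! ### Auxiliary lemmas -/

open Letter in
lemma wrd_mul (u v : List Letter) : wrd u * wrd v = wrd (u ++ v) := by
  simp [wrd, MonoidAlgebra.single_mul_single, FreeMonoid.ofList_append]

lemma wrd_cons (a : Letter) (u : List Letter) : wrd [a] * wrd u = wrd (a :: u) := by
  rw [wrd_mul]; rfl

lemma shW_nil_right (lam : ℚ) (u : List Letter) : shW lam u [] = wrd u := by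
  cases u with
  | nil => rw [shW.eq_1]
  | cons a t => rw [shW.eq_2]

lemma shW_y_left (lam : ℚ) (u v : List Letter) :
    shW lam (Letter.y :: u) v = wrd [Letter.y] * shW lam u v := by
  cases v with
  | nil => rw [shW_nil_right, shW_nil_right, wrd_cons]
  | cons b t => rw [shW.eq_3] ; simp

lemma shW_y_right (lam : ℚ) (u v : List Letter) :
    shW lam u (Letter.y :: v) = wrd [Letter.y] * shW lam u v := by
  induction u with
  | nil => rw [shW.eq_1, shW.eq_1, wrd_cons]
  | cons a t ih =>
    cases a with
    | y => rw [shW_y_left, shW_y_left, ih]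
    | d => rw [shW.eq_4]

lemma shW_d (lam : ℚ) (hlam : lam ≠ 0) (u v : List Letter) :
    shW lam u (Letter.d :: v) + shW lam (Letter.d :: u) v
      + lam • shW lam (Letter.d :: u) (Letter.d :: v) = wrd [Letter.d] * shW lam u v := by
  rw [shW.eq_5, smul_inv_smul₀ hlam]
  abel

lemma shL_single (lam : ℚ) (a b : FreeMonoid Letter) (c e : ℚ) :
    shL lam (MonoidAlgebra.single a c) (MonoidAlgebra.single b e)
      = (c * e) • shW lam (FreeMonoid.toList a) (FreeMonoid.toList b) := by
  simp only [shL, LinearMap.comp_apply, LinearEquiv.coe_coe,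
    MonoidAlgebra.coeffLinearEquiv_apply, MonoidAlgebra.coeff_single]
  erw [Finsupp.lsum_single, LinearMap.toSpanSingleton_apply, LinearMap.smul_apply,
    LinearMap.comp_apply, LinearEquiv.coe_coe,
    show (MonoidAlgebra.coeffLinearEquiv ℚ) (MonoidAlgebra.single b e)
      = (Finsupp.single b e : FreeMonoid Letter →₀ ℚ) from rfl, Finsupp.lsum_single (S := ℚ), LinearMap.toSpanSingleton_apply, smul_smul]

lemma shL_wrd (lam : ℚ) (u v : List Letter) : shL lam (wrd u) (wrd v) = shW lam u v := by
  rw [wrd, wrd, shL_single]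
  simp

lemma shL_y_left (lam : ℚ) (p q : V) :
    shL lam (wrd [Letter.y] * p) q = wrd [Letter.y] * shL lam p q := by
  induction p using MonoidAlgebra.induction_linear with
  | zero => simp
  | add f g hf hg => simp only [mul_add, map_add, LinearMap.add_apply, hf, hg]
  | single a c =>
    induction q using MonoidAlgebra.induction_linear with
    | zero => simp
    | add f g hf hg => simp only [map_add, mul_add, hf, hg]
    | single b e =>
      have h1 : wrd [Letter.y] * MonoidAlgebra.single a c
          = MonoidAlgebra.single (FreeMonoid.ofList [Letter.y] * a) c := by
        rw [wrd, MonoidAlgebra.single_mul_single, one_mul]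
      rw [h1, shL_single, shL_single, mul_smul_comm, ← shW_y_left]
      simp [FreeMonoid.toList_mul]

lemma shL_y_right (lam : ℚ) (p q : V) :
    shL lam p (wrd [Letter.y] * q) = wrd [Letter.y] * shL lam p q := by
  induction p using MonoidAlgebra.induction_linear with
  | zero => simp
  | add f g hf hg => simp only [map_add, LinearMap.add_apply, mul_add, hf, hg]
  | single a c =>
    induction q using MonoidAlgebra.induction_linear with
    | zero => simp
    | add f g hf hg => simp only [map_add, mul_add, hf, hg]
    | single b e =>
      have h1 : wrd [Letter.y] * MonoidAlgebra.single b e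
          = MonoidAlgebra.single (FreeMonoid.ofList [Letter.y] * b) e := by
        rw [wrd, MonoidAlgebra.single_mul_single, one_mul]
      rw [h1, shL_single, shL_single, mul_smul_comm, ← shW_y_right]
      simp [FreeMonoid.toList_mul]

lemma shL_d (lam : ℚ) (hlam : lam ≠ 0) (p q : V) :
    shL lam p (wrd [Letter.d] * q) + shL lam (wrd [Letter.d] * p) q
      + lam • shL lam (wrd [Letter.d] * p) (wrd [Letter.d] * q)
      = wrd [Letter.d] * shL lam p q := by
  induction p using MonoidAlgebra.induction_linear with
  | zero => simp
  | add f g hf hg =>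
    simp only [mul_add, map_add, LinearMap.add_apply, smul_add]
    rw [← hf, ← hg]; abel
  | single a c =>
    induction q using MonoidAlgebra.induction_linear with
    | zero => simp
    | add f g hf hg =>
      simp only [mul_add, map_add, smul_add]
      rw [← hf, ← hg]; abel
    | single b e =>
      have h1 : ∀ x : FreeMonoid Letter, ∀ r : ℚ, wrd [Letter.d] * MonoidAlgebra.single x r
          = MonoidAlgebra.single (FreeMonoid.ofList [Letter.d] * x) r := by
        intro x r
        rw [wrd, MonoidAlgebra.single_mul_single, one_mul]
      have h2 : FreeMonoid.toList (FreeMonoid.ofList [Letter.d] * a) = Letter.d :: FreeMonoid.toList a := by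
        simp [FreeMonoid.toList_mul]
      have h3 : FreeMonoid.toList (FreeMonoid.ofList [Letter.d] * b) = Letter.d :: FreeMonoid.toList b := by
        simp [FreeMonoid.toList_mul]
      rw [h1, h1, shL_single, shL_single, shL_single, shL_single, h2, h3, mul_smul_comm,
        smul_comm lam, ← smul_add, ← smul_add]
      congr 1
      exact shW_d lam hlam _ _

lemma m_dval_y (lam : ℚ) (x : V ⊗[ℚ] V) :
    TensorProduct.lift (shL lam) (dval lam Letter.y * x)
      = (2 : ℚ) • (wrd [Letter.y] * TensorProduct.lift (shL lam) x) := by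
  induction x using TensorProduct.induction_on with
  | zero => simp
  | add a b ha hb => simp only [mul_add, map_add, ha, hb, smul_add]
  | tmul p q =>
    simp only [dval, add_mul, Algebra.TensorProduct.tmul_mul_tmul, one_mul, map_add,
      TensorProduct.lift.tmul]
    rw [shL_y_right, shL_y_left, two_smul]

lemma m_dval_d (lam : ℚ) (hlam : lam ≠ 0) (x : V ⊗[ℚ] V) :
    TensorProduct.lift (shL lam) (dval lam Letter.d * x)
      = wrd [Letter.d] * TensorProduct.lift (shL lam) x := by
  induction x using TensorProduct.induction_on with
  | zero => simp
  | add a b ha hb => simp only [mul_add, map_add, ha, hb]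
  | tmul p q =>
    simp only [dval, add_mul, smul_mul_assoc, Algebra.TensorProduct.tmul_mul_tmul, one_mul,
      map_add, map_smul, TensorProduct.lift.tmul]
    exact shL_d lam hlam p q

lemma Delta_letter (lam : ℚ) (a : Letter) : Delta lam (wrd [a]) = dval lam a := by
  have : FreeMonoid.ofList [a] = FreeMonoid.of a := rfl
  simp [Delta, wrd, this, MonoidAlgebra.lift_single, FreeMonoid.lift_eval_of]

lemma Delta_cons (lam : ℚ) (a : Letter) (u : List Letter) :
    Delta lam (wrd (a :: u)) = dval lam a * Delta lam (wrd u) := by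
  rw [← wrd_cons, map_mul, Delta_letter]

lemma Tneg_mul (a : Letter) {t : V} (ht : t ∈ Tneg) : wrd [a] * t ∈ Tneg := by
  refine Submodule.span_induction (p := fun x _ => wrd [a] * x ∈ Tneg) ?_ ?_ ?_ ?_ ht
  · rintro x ⟨w', rfl⟩
    rw [wrd_cons]
    exact Submodule.subset_span ⟨a :: w', rfl⟩
  · simp [Tneg]
  · intro x y _ _ hx hy
    rw [mul_add]; exact add_mem hx hy
  · intro r x _ hx
    rw [mul_smul_comm]; exact Submodule.smul_mem _ _ hx

/-- For `λ ≠ 0` and any word `w`: `m_λ(Δ̄_λ(w)) − 2^{dpt(w)}·w ∈ T₋`, where `m_λ` is the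
linear map induced by `⧢_λ` and `dpt(w)` is the number of occurrences of the letter `y`
in `w`. -/
theorem stmt_13 (lam : ℚ) (hlam : lam ≠ 0) (w : List Letter) :
    TensorProduct.lift (shL lam) (Delta lam (wrd w)) -
        ((2 : ℚ) ^ (w.count Letter.y)) • wrd w ∈ Tneg := by
  induction w with
  | nil =>
    have h0 : wrd ([] : List Letter) = 1 := rfl
    have h1 : Delta lam (wrd ([] : List Letter)) = (1 : V) ⊗ₜ[ℚ] (1 : V) := by
      rw [h0, map_one, Algebra.TensorProduct.one_def]
    rw [h1, TensorProduct.lift.tmul, ← h0, shL_wrd, shW.eq_1]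
    simp [← h0]
  | cons a u ih =>
    rw [Delta_cons]
    cases a with
    | y =>
      rw [m_dval_y]
      have hk : ((2:ℚ) ^ ((Letter.y :: u).count Letter.y)) • wrd (Letter.y :: u)
          = (2:ℚ) • (wrd [Letter.y] * ((2:ℚ) ^ (u.count Letter.y) • wrd u)) := by
        rw [List.count_cons_self, pow_succ, mul_comm ((2:ℚ) ^ (u.count Letter.y)) 2,
          mul_smul, ← wrd_cons Letter.y u, mul_smul_comm]
      rw [hk, ← smul_sub, ← mul_sub]
      exact Submodule.smul_mem _ _ (Tneg_mul Letter.y ih)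
    | d =>
      rw [m_dval_d lam hlam]
      have hk : ((2:ℚ) ^ ((Letter.d :: u).count Letter.y)) • wrd (Letter.d :: u)
          = wrd [Letter.d] * ((2:ℚ) ^ (u.count Letter.y) • wrd u) := by
        rw [List.count_cons_of_ne (by simp), ← wrd_cons Letter.d u, mul_smul_comm]
      rw [hk, ← mul_sub]
      exact Tneg_mul Letter.d ih
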